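/- Let A be the adjacency matrix of a signed graph of order n, let X = (x₁,…,xₙ) be an eigenvector of A for the eigenvalue λ₁(A), and let r, s, w be pairwise distinct vertices with x_r ≥ x_s, A s w = 1, A r w = 0, and x_w > 0. Let B be the matrix agreeing with A in all entries except B s w = B w s = 0 and B r w = B w r = 1. Then λ₁(B) > λ₁(A). -/

import Mathlib

open Matrix

/-- The largest eigenvalue of a real matrix (for symmetric matrices this is λ₁). -/
noncomputable def lam1 {n : ℕ} (A : Matrix (Fin n) (Fin n) ℝ) : ℝ :=
  sSup {μ : ℝ | ∃ v : Fin n → ℝ, v ≠ 0 ∧ A.mulVec v = μ • v}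

/-- `A` is the adjacency matrix of a signed graph: symmetric, zero diagonal,
entries in {-1,0,1}. -/
def IsSignedAdj {n : ℕ} (A : Matrix (Fin n) (Fin n) ℝ) : Prop :=
  A.IsSymm ∧ (∀ i, A i i = 0) ∧ ∀ i j, A i j = -1 ∨ A i j = 0 ∨ A i j = 1

/-- A signed graph is balanced if a global sign switching makes all edges positive. -/
def IsBalanced {n : ℕ} (A : Matrix (Fin n) (Fin n) ℝ) : Prop :=
  ∃ s : Fin n → ℝ, (∀ i, s i = -1 ∨ s i = 1) ∧ ∀ i j, 0 ≤ s i * A i j * s j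

/-- Every fully present copy of K_{3,3} is balanced. -/
def K33Free {n : ℕ} (A : Matrix (Fin n) (Fin n) ℝ) : Prop :=
  ∀ a₁ a₂ a₃ b₁ b₂ b₃ : Fin n,
    [a₁, a₂, a₃, b₁, b₂, b₃].Nodup →
    (∀ a ∈ [a₁, a₂, a₃], ∀ b ∈ [b₁, b₂, b₃], A a b ≠ 0) →
    ∀ a ∈ [a₁, a₂, a₃], ∀ a' ∈ [a₁, a₂, a₃], ∀ b ∈ [b₁, b₂, b₃], ∀ b' ∈ [b₁, b₂, b₃],
      A a b * A a b' * A a' b * A a' b' = 1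

/-- Switching isomorphism of signed adjacency matrices. -/
def SwitchIso {n : ℕ} (A B : Matrix (Fin n) (Fin n) ℝ) : Prop :=
  ∃ σ : Equiv.Perm (Fin n), ∃ s : Fin n → ℝ, (∀ i, s i = -1 ∨ s i = 1) ∧
    ∀ i j, B i j = s i * s j * A (σ i) (σ j)

/-- Adjacency matrix of Γ_{n,t}: vertex 0 is u, vertices 1,…,n-1 form an
all-positive K_{n-1}; u is adjacent to 1,…,t-1, with u1 the unique negative edge. -/
noncomputable def Mnt (n t : ℕ) : Matrix (Fin n) (Fin n) ℝ :=
  Matrix.of fun i j =>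
    if i = j then 0
    else if (i : ℕ) = 0 then (if (j : ℕ) = 1 then -1 else if (j : ℕ) < t then 1 else 0)
    else if (j : ℕ) = 0 then (if (i : ℕ) = 1 then -1 else if (i : ℕ) < t then 1 else 0)
    else 1

open scoped RealInnerProductSpace

section Aux
variable {n : ℕ}

lemma dot_self_pos {v : Fin n → ℝ} (hv : v ≠ 0) : 0 < v ⬝ᵥ v := by
  have h0 : (0:ℝ) ≤ v ⬝ᵥ v := Finset.sum_nonneg fun i _ => mul_self_nonneg _
  rcases h0.lt_or_eq with h | h
  · exact h
  · exact absurd (dotProduct_self_eq_zero.mp h.symm) hv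

lemma lam1_spec [NeZero n] {A : Matrix (Fin n) (Fin n) ℝ} (hA : A.IsHermitian) :
    (∃ v : Fin n → ℝ, v ≠ 0 ∧ A.mulVec v = lam1 A • v) ∧
    (∀ v : Fin n → ℝ, v ⬝ᵥ A.mulVec v ≤ lam1 A * (v ⬝ᵥ v)) := by
  classical
  have hne : (Finset.univ : Finset (Fin n)).Nonempty := Finset.univ_nonempty
  obtain ⟨i₀, -, hi₀⟩ := Finset.exists_mem_eq_sup' hne hA.eigenvalues
  have hMle : ∀ i, hA.eigenvalues i ≤ hA.eigenvalues i₀ := fun i =>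
    hi₀ ▸ Finset.le_sup' _ (Finset.mem_univ i)
  have hAT : Aᵀ = A := by
    rw [← conjTranspose_eq_transpose_of_trivial]; exact hA
  have b := hA.eigenvectorBasis
  -- Rayleigh bound
  have hray : ∀ v : Fin n → ℝ, v ⬝ᵥ A.mulVec v ≤ hA.eigenvalues i₀ * (v ⬝ᵥ v) := by
    intro v
    have hbi : ∀ i : Fin n, dotProduct (α := ℝ) (hA.eigenvectorBasis i) (A.mulVec v)
        = hA.eigenvalues i * dotProduct (α := ℝ) (hA.eigenvectorBasis i) v := by
      intro i
      have hsymm : dotProduct (α := ℝ) (hA.eigenvectorBasis i) (A.mulVec v)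
          = (A.mulVec (hA.eigenvectorBasis i)) ⬝ᵥ v := by
        rw [dotProduct_mulVec, ← mulVec_transpose, hAT]
      have h3 : A.mulVec (hA.eigenvectorBasis i) =
          hA.eigenvalues i • (hA.eigenvectorBasis i : Fin n → ℝ) :=
        hA.mulVec_eigenvectorBasis i
      rw [hsymm, h3, smul_dotProduct, smul_eq_mul]
    have hexp := hA.eigenvectorBasis.sum_inner_mul_inner
      (WithLp.toLp 2 v) (WithLp.toLp 2 (A.mulVec v))
    have hpar := hA.eigenvectorBasis.sum_inner_mul_inner
      (WithLp.toLp 2 v) (WithLp.toLp 2 v)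
    simp only [PiLp.inner_apply, PiLp.toLp_apply, RCLike.inner_apply, starRingEnd_apply, star_trivial] at hexp hpar
    have hexp' : ∑ i : Fin n, (v ⬝ᵥ (hA.eigenvectorBasis i : Fin n → ℝ)) *
        (dotProduct (α := ℝ) (hA.eigenvectorBasis i) (A.mulVec v)) = v ⬝ᵥ A.mulVec v := by
      simpa [dotProduct, Finset.mul_sum, Finset.sum_mul, mul_comm, mul_left_comm] using hexp
    have hpar' : ∑ i : Fin n, (v ⬝ᵥ (hA.eigenvectorBasis i : Fin n → ℝ)) *
        (dotProduct (α := ℝ) (hA.eigenvectorBasis i) v) = v ⬝ᵥ v := by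
      simpa [dotProduct, Finset.mul_sum, Finset.sum_mul, mul_comm, mul_left_comm] using hpar
    calc v ⬝ᵥ A.mulVec v
        = ∑ i : Fin n, (v ⬝ᵥ (hA.eigenvectorBasis i : Fin n → ℝ)) *
            (dotProduct (α := ℝ) (hA.eigenvectorBasis i) (A.mulVec v)) := hexp'.symm
      _ ≤ ∑ i : Fin n, hA.eigenvalues i₀ * ((v ⬝ᵥ (hA.eigenvectorBasis i : Fin n → ℝ)) *
            (dotProduct (α := ℝ) (hA.eigenvectorBasis i) v)) := by
          refine Finset.sum_le_sum fun i _ => ?_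
          rw [hbi i]
          have h2 : dotProduct (α := ℝ) (hA.eigenvectorBasis i) v
              = v ⬝ᵥ (hA.eigenvectorBasis i : Fin n → ℝ) := dotProduct_comm _ _
          rw [h2]
          nlinarith [hMle i, mul_self_nonneg (v ⬝ᵥ (hA.eigenvectorBasis i : Fin n → ℝ))]
      _ = hA.eigenvalues i₀ * (v ⬝ᵥ v) := by rw [← Finset.mul_sum, hpar']
  have hmem : hA.eigenvalues i₀ ∈ {μ : ℝ | ∃ v : Fin n → ℝ, v ≠ 0 ∧ A.mulVec v = μ • v} := by
    refine ⟨hA.eigenvectorBasis i₀, ?_, ?_⟩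
    · intro h
      exact hA.eigenvectorBasis.orthonormal.ne_zero i₀ (by ext j; exact congrFun h j)
    · exact hA.mulVec_eigenvectorBasis i₀
  have hub : ∀ μ ∈ {μ : ℝ | ∃ v : Fin n → ℝ, v ≠ 0 ∧ A.mulVec v = μ • v},
      μ ≤ hA.eigenvalues i₀ := by
    rintro μ ⟨v, hv0, hveq⟩
    have h1 : v ⬝ᵥ A.mulVec v = μ * (v ⬝ᵥ v) := by
      rw [hveq, dotProduct_smul, smul_eq_mul]
    have := hray v
    rw [h1] at this
    exact le_of_mul_le_mul_right this (dot_self_pos hv0)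
  have hlam : lam1 A = hA.eigenvalues i₀ :=
    le_antisymm (csSup_le ⟨_, hmem⟩ hub) (le_csSup ⟨_, hub⟩ hmem)
  rw [hlam]
  exact ⟨hmem, hray⟩

lemma eigen_of_rayleigh_eq [NeZero n] {A : Matrix (Fin n) (Fin n) ℝ} (hA : A.IsHermitian)
    {v : Fin n → ℝ} (hveq : v ⬝ᵥ A.mulVec v = lam1 A * (v ⬝ᵥ v)) :
    A.mulVec v = lam1 A • v := by
  have hP : PosSemidef (lam1 A • 1 - A) := by
    refine PosSemidef.of_dotProduct_mulVec_nonneg ?_ ?_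
    · refine IsHermitian.sub ?_ hA
      rw [IsHermitian, conjTranspose_smul, star_trivial, conjTranspose_one]
    · intro x
      have hmv : (lam1 A • 1 - A).mulVec x = lam1 A • x - A.mulVec x := by
        rw [sub_mulVec, smul_mulVec, one_mulVec]
      rw [hmv]
      have hstar : (star x : Fin n → ℝ) = x := by ext i; simp
      rw [hstar, dotProduct_sub, dotProduct_smul, smul_eq_mul]
      have := (lam1_spec hA).2 x
      linarith
  have h0 : star v ⬝ᵥ (lam1 A • 1 - A).mulVec v = 0 := by
    have hstar : (star v : Fin n → ℝ) = v := by ext i; simp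
    rw [hstar, sub_mulVec, smul_mulVec, one_mulVec, dotProduct_sub, dotProduct_smul,
      smul_eq_mul, hveq]
    ring
  have := (hP.dotProduct_mulVec_zero_iff v).mp h0
  rw [sub_mulVec, smul_mulVec, one_mulVec, sub_eq_zero] at this
  exact this.symm

end Aux


theorem lam1_lt_of_edge_rotation (n : ℕ) (A : Matrix (Fin n) (Fin n) ℝ)
    (hA : IsSignedAdj A) (x : Fin n → ℝ) (hx : x ≠ 0)
    (hev : A.mulVec x = lam1 A • x)
    (r s w : Fin n) (hrs : r ≠ s) (hrw : r ≠ w) (hsw : s ≠ w)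
    (hx_rs : x s ≤ x r) (hAsw : A s w = 1) (hArw : A r w = 0) (hxw : 0 < x w) :
    lam1 A <
      lam1 (Matrix.of fun i j =>
        if (i = s ∧ j = w) ∨ (i = w ∧ j = s) then 0
        else if (i = r ∧ j = w) ∨ (i = w ∧ j = r) then 1
        else A i j) := by
  classical
  have : NeZero n := ⟨(Fin.pos r).ne'⟩
  set B : Matrix (Fin n) (Fin n) ℝ := Matrix.of fun i j =>
        if (i = s ∧ j = w) ∨ (i = w ∧ j = s) then 0
        else if (i = r ∧ j = w) ∨ (i = w ∧ j = r) then 1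
        else A i j with hBdef
  have hAsymm : ∀ i j, A i j = A j i := fun i j => (congrFun (congrFun hA.1 i) j).symm
  have hAherm : A.IsHermitian := by
    rw [IsHermitian, conjTranspose_eq_transpose_of_trivial]; exact hA.1
  -- decomposition B = A + E
  set E : Matrix (Fin n) (Fin n) ℝ :=
    Matrix.single r w 1 + Matrix.single w r 1 - Matrix.single s w 1 - Matrix.single w s 1
    with hEdef
  have hAws : A w s = 1 := by rw [← hAsymm]; exact hAsw
  have hAwr : A w r = 0 := by rw [← hAsymm]; exact hArw
  have hne : s ≠ r := Ne.symm hrs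
  have hne2 : w ≠ r := Ne.symm hrw
  have hne3 : w ≠ s := Ne.symm hsw
  have hBeq : B = A + E := by
    ext i j
    simp only [hBdef, hEdef, Matrix.add_apply, Matrix.sub_apply, of_apply]
    by_cases h1 : (i = s ∧ j = w) ∨ (i = w ∧ j = s)
    · rw [if_pos h1]
      rcases h1 with ⟨rfl, rfl⟩ | ⟨rfl, rfl⟩ <;>
        simp [Matrix.single, hAsw, hAws, hrs, hrw, hsw, hne, hne2, hne3]
    · rw [if_neg h1]
      by_cases h2 : (i = r ∧ j = w) ∨ (i = w ∧ j = r)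
      · rw [if_pos h2]
        rcases h2 with ⟨rfl, rfl⟩ | ⟨rfl, rfl⟩ <;>
          simp [Matrix.single, hArw, hAwr, hrs, hrw, hsw, hne, hne2, hne3]
      · rw [if_neg h2]
        push_neg at h1 h2
        have e1 : ¬(r = i ∧ w = j) := fun ⟨hi, hj⟩ => h2.1 hi.symm hj.symm
        have e2 : ¬(w = i ∧ r = j) := fun ⟨hi, hj⟩ => h2.2 hi.symm hj.symm
        have e3 : ¬(s = i ∧ w = j) := fun ⟨hi, hj⟩ => h1.1 hi.symm hj.symm
        have e4 : ¬(w = i ∧ s = j) := fun ⟨hi, hj⟩ => h1.2 hi.symm hj.symm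
        simp [Matrix.single, e1, e2, e3, e4]
  have hstdT : ∀ a b : Fin n, (Matrix.single a b (1:ℝ))ᵀ = Matrix.single b a 1 := by
    intro a b
    ext i j
    simp [Matrix.single, transpose_apply, and_comm]
  have hBherm : B.IsHermitian := by
    rw [IsHermitian, conjTranspose_eq_transpose_of_trivial, hBeq, hEdef]
    rw [transpose_add, transpose_sub, transpose_sub, transpose_add, hA.1,
      hstdT, hstdT, hstdT, hstdT]
    abel
  -- quadratic form of E
  have hstd : ∀ a b : Fin n, x ⬝ᵥ (Matrix.single a b (1:ℝ)).mulVec x = x a * x b := by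
    intro a b
    rw [single_mulVec]
    simp [dotProduct, Function.update_apply, mul_ite]
  have hquad : x ⬝ᵥ B.mulVec x = x ⬝ᵥ A.mulVec x + 2 * (x w * (x r - x s)) := by
    rw [hBeq, add_mulVec, dotProduct_add, hEdef]
    rw [sub_mulVec, sub_mulVec, add_mulVec, dotProduct_sub, dotProduct_sub, dotProduct_add,
      hstd, hstd, hstd, hstd]
    ring
  have hxAx : x ⬝ᵥ A.mulVec x = lam1 A * (x ⬝ᵥ x) := by
    rw [hev, dotProduct_smul, smul_eq_mul]
  have hxx : 0 < x ⬝ᵥ x := dot_self_pos hx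
  have hgain : 0 ≤ 2 * (x w * (x r - x s)) := by nlinarith
  have hle : lam1 A * (x ⬝ᵥ x) ≤ x ⬝ᵥ B.mulVec x := by rw [hquad, hxAx]; linarith
  have hBray := (lam1_spec hBherm).2 x
  have hlam_le : lam1 A ≤ lam1 B :=
    le_of_mul_le_mul_right (le_trans hle hBray) hxx
  by_contra hcon
  push_neg at hcon
  have heq : lam1 B = lam1 A := le_antisymm hcon hlam_le
  have hxBx : x ⬝ᵥ B.mulVec x = lam1 B * (x ⬝ᵥ x) := by
    refine le_antisymm hBray ?_
    rw [heq]; exact hle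
  have hBev : B.mulVec x = lam1 B • x := eigen_of_rayleigh_eq hBherm hxBx
  -- row r
  have hrowE : (E.mulVec x) r = x w := by
    rw [hEdef, sub_mulVec, sub_mulVec, add_mulVec]
    simp [single_mulVec, Function.update_apply, hrs, hrw, (Ne.symm hrw), (Ne.symm hrs)]
  have hrowB : (B.mulVec x) r = lam1 A * x r + x w := by
    rw [hBeq, add_mulVec]
    have : (A.mulVec x) r = lam1 A * x r := by rw [hev]; simp [smul_eq_mul]
    simp [Pi.add_apply, this, hrowE]
  rw [hBev] at hrowB
  rw [heq] at hrowB
  simp only [Pi.smul_apply, smul_eq_mul] at hrowB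
  linarith
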